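/- Let p, q ∈ K[x] be monic polynomials whose degrees are relatively prime, let A be the K-subalgebra of K[x] generated by p and q, and let α ∈ K. Then the following are equivalent: (i) α ∈ Sp(A); (ii) either p'(α) = 0 and q'(α) = 0, or there exists β ∈ K with β ≠ α such that p(α) = p(β) and q(α) = q(β); (iii) χ_{p,q}(α) = 0. -/

import Mathlib

open Polynomial

/-- The resultant of two polynomials, defined as the determinant of their Sylvester matrix
(with coefficients listed in ascending order of degree). -/
noncomputable def resultant {R : Type*} [CommRing R] (f g : Polynomial R) : R :=
  Matrix.det (Matrix.of fun (i j : Fin (g.natDegree + f.natDegree)) =>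
    if (i : ℕ) < g.natDegree then
      (if (i : ℕ) ≤ (j : ℕ) then f.coeff ((j : ℕ) - (i : ℕ)) else 0)
    else
      (if (i : ℕ) - g.natDegree ≤ (j : ℕ) then g.coeff ((j : ℕ) - ((i : ℕ) - g.natDegree))
       else 0))

/-- For `p ∈ K[x]`, the polynomial `P(x,y) = (p(x) − p(y))/(x − y)`, viewed as a polynomial
in `y` with coefficients in `K[x]` (the outer variable is `y`). -/
noncomputable def divDiff {K : Type*} [Field K] (p : Polynomial K) :
    Polynomial (Polynomial K) :=
  (p.map (Polynomial.C : K →+* Polynomial K) - Polynomial.C p) /ₘ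
    (Polynomial.X - Polynomial.C Polynomial.X)

/-- The characteristic polynomial `χ_{p,q} = Res_y(P(x,y), Q(x,y))` of the pair `p, q`. -/
noncomputable def charPoly {K : Type*} [Field K] (p q : Polynomial K) : Polynomial K :=
  _root_.resultant (divDiff p) (divDiff q)

/-- The spectrum of a subalgebra `A` of `K[x]`. -/
def subalgebraSpectrum {K : Type*} [Field K] (A : Subalgebra K (Polynomial K)) : Set K :=
  {α | (∀ f ∈ A, (Polynomial.derivative f).eval α = 0) ∨
    ∃ β : K, β ≠ α ∧ ∀ f ∈ A, f.eval α = f.eval β}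

/-! ### Auxiliary lemmas -/

section Sylvester

variable {R S : Type*} [CommRing R] [CommRing S]

/-- The Sylvester matrix with explicitly given sizes. -/
noncomputable def sylv (f g : Polynomial R) (m n : ℕ) : Matrix (Fin (n+m)) (Fin (n+m)) R :=
  Matrix.of fun i j =>
    if (i : ℕ) < n then
      (if (i : ℕ) ≤ (j : ℕ) then f.coeff ((j : ℕ) - (i : ℕ)) else 0)
    else
      (if (i : ℕ) - n ≤ (j : ℕ) then g.coeff ((j : ℕ) - ((i : ℕ) - n)) else 0)

lemma resultant_eq_sylv (f g : Polynomial R) :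
    _root_.resultant f g = (sylv f g f.natDegree g.natDegree).det := rfl

lemma sylv_map (φ : R →+* S) (f g : Polynomial R) (m n : ℕ) :
    sylv (f.map φ) (g.map φ) m n = φ.mapMatrix (sylv f g m n) := by
  ext i j
  simp only [sylv, Matrix.of_apply, RingHom.mapMatrix_apply, Matrix.map_apply, coeff_map,
    apply_ite φ, map_zero]

lemma resultant_map (φ : R →+* S) (f g : Polynomial R)
    (hf : (f.map φ).natDegree = f.natDegree) (hg : (g.map φ).natDegree = g.natDegree) :
    _root_.resultant (f.map φ) (g.map φ) = φ (_root_.resultant f g) := by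
  rw [resultant_eq_sylv, resultant_eq_sylv, hf, hg, sylv_map, RingHom.map_det]

lemma sum_ite_coeff (a f : Polynomial R) (n j : ℕ)
    (ha : ∀ i, n ≤ i → a.coeff i = 0) :
    ∑ i ∈ Finset.range n, (if i ≤ j then a.coeff i * f.coeff (j - i) else 0)
      = (a * f).coeff j := by
  have hz : ∀ i, n ≤ i → (if i ≤ j then a.coeff i * f.coeff (j - i) else 0) = 0 := by
    intro i hi; split_ifs with h
    · rw [ha i hi, zero_mul]
    · rfl
  rw [coeff_mul, Finset.Nat.sum_antidiagonal_eq_sum_range_succ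
    (fun x y => a.coeff x * f.coeff y)]
  calc ∑ i ∈ Finset.range n, (if i ≤ j then a.coeff i * f.coeff (j - i) else 0)
      = ∑ i ∈ Finset.range (n + (j+1)), (if i ≤ j then a.coeff i * f.coeff (j - i) else 0) :=
        Finset.sum_subset (Finset.range_subset_range.2 (Nat.le_add_right _ _))
          (fun i _ hi => hz i (by simpa using Finset.mem_range.not.mp hi))
    _ = ∑ i ∈ Finset.range (j+1), (if i ≤ j then a.coeff i * f.coeff (j - i) else 0) :=
        (Finset.sum_subset (Finset.range_subset_range.2 (by omega))
          (fun i _ hi => if_neg (by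
            have := Finset.mem_range.not.mp hi; omega))).symm
    _ = ∑ i ∈ Finset.range (j+1), a.coeff i * f.coeff (j - i) :=
        Finset.sum_congr rfl (fun i hi => if_pos (by
          have := Finset.mem_range.mp hi; omega))

lemma vecMul_sylv (f g : Polynomial R) (m n : ℕ) (a b : Polynomial R)
    (ha : ∀ i, n ≤ i → a.coeff i = 0) (hb : ∀ i, m ≤ i → b.coeff i = 0)
    (j : Fin (n+m)) :
    Matrix.vecMul (fun i : Fin (n+m) =>
        if (i : ℕ) < n then a.coeff (i : ℕ) else b.coeff ((i : ℕ) - n))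
      (sylv f g m n) j = (a * f + b * g).coeff j := by
  simp only [Matrix.vecMul, dotProduct, sylv, Matrix.of_apply]
  rw [Fin.sum_univ_eq_sum_range (fun i =>
    (if i < n then a.coeff i else b.coeff (i - n)) *
      (if i < n then (if i ≤ (j:ℕ) then f.coeff ((j:ℕ) - i) else 0)
       else (if i - n ≤ (j:ℕ) then g.coeff ((j:ℕ) - (i - n)) else 0)))]
  rw [Finset.sum_range_add]
  rw [coeff_add]
  congr 1
  · rw [← sum_ite_coeff a f n (j:ℕ) ha]
    refine Finset.sum_congr rfl (fun i hi => ?_)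
    have hin : i < n := Finset.mem_range.mp hi
    simp only [if_pos hin, mul_ite, mul_zero]
  · rw [← sum_ite_coeff b g m (j:ℕ) hb]
    refine Finset.sum_congr rfl (fun i hi => ?_)
    have him : i < m := Finset.mem_range.mp hi
    have h1 : ¬ (n + i < n) := by omega
    simp only [if_neg h1, Nat.add_sub_cancel_left, mul_ite, mul_zero]

end Sylvester

section Field

variable {F : Type*} [Field F]

lemma coeff_sum_monomial (c : ℕ → F) (n k : ℕ) :
    (∑ i ∈ Finset.range n, monomial i (c i)).coeff k = if k < n then c k else 0 := by
  rw [finset_sum_coeff]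
  simp only [coeff_monomial]
  rw [Finset.sum_ite_eq' (Finset.range n) k c]
  simp [Finset.mem_range]

lemma degree_mul_lt_of (a f : Polynomial F) (n m : ℕ)
    (hda : a.degree < (n : WithBot ℕ)) (hf : f.degree ≤ (m : WithBot ℕ)) :
    (a * f).degree < ((n + m : ℕ) : WithBot ℕ) := by
  rcases eq_or_ne a 0 with rfl | h
  · rw [zero_mul, degree_zero]; exact WithBot.bot_lt_coe _
  · apply lt_of_le_of_lt (degree_mul_le a f)
    have hna : a.natDegree < n := by
      rw [degree_eq_natDegree h] at hda; exact_mod_cast hda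
    calc a.degree + f.degree = (a.natDegree : WithBot ℕ) + f.degree := by
          rw [degree_eq_natDegree h]
      _ ≤ (a.natDegree : WithBot ℕ) + (m : WithBot ℕ) := add_le_add le_rfl hf
      _ = ((a.natDegree + m : ℕ) : WithBot ℕ) := by push_cast; rfl
      _ < ((n + m : ℕ) : WithBot ℕ) := by
          exact_mod_cast show a.natDegree + m < n + m by omega

lemma det_sylv_eq_zero_iff (f g : Polynomial F) (m n : ℕ)
    (hf : f.degree ≤ (m : WithBot ℕ)) (hg : g.degree ≤ (n : WithBot ℕ)) :
    (sylv f g m n).det = 0 ↔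
      ∃ a b : Polynomial F, ¬(a = 0 ∧ b = 0) ∧ a.degree < (n : WithBot ℕ) ∧
        b.degree < (m : WithBot ℕ) ∧ a * f + b * g = 0 := by
  rw [← Matrix.exists_vecMul_eq_zero_iff]
  constructor
  · rintro ⟨v, hv0, hv⟩
    set v' : ℕ → F := fun i => if h : i < n + m then v ⟨i, h⟩ else 0 with hv'def
    set a : Polynomial F := ∑ i ∈ Finset.range n, monomial i (v' i) with hadef
    set b : Polynomial F := ∑ i ∈ Finset.range m, monomial i (v' (n + i)) with hbdef
    have hac : ∀ k, a.coeff k = if k < n then v' k else 0 :=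
      fun k => coeff_sum_monomial v' n k
    have hbc : ∀ k, b.coeff k = if k < m then v' (n + k) else 0 :=
      fun k => coeff_sum_monomial (fun i => v' (n + i)) m k
    have hdega : a.degree < (n : WithBot ℕ) :=
      (degree_lt_iff_coeff_zero _ _).2 (fun k hk => by rw [hac]; exact if_neg (by omega))
    have hdegb : b.degree < (m : WithBot ℕ) :=
      (degree_lt_iff_coeff_zero _ _).2 (fun k hk => by rw [hbc]; exact if_neg (by omega))
    have hveq : (fun i : Fin (n+m) =>
        if (i : ℕ) < n then a.coeff (i : ℕ) else b.coeff ((i : ℕ) - n)) = v := by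
      funext i
      rcases lt_or_ge (i : ℕ) n with h | h
      · rw [if_pos h, hac, if_pos h, hv'def]
        simp [i.isLt]
      · rw [if_neg (by omega), hbc, if_pos (by have := i.isLt; omega), hv'def]
        have h2 : n + ((i : ℕ) - n) = (i : ℕ) := by omega
        simp only [h2]
        simp [i.isLt]
    have hrel : a * f + b * g = 0 := by
      ext j
      rcases lt_or_ge j (n + m) with h | h
      · have hkey := vecMul_sylv f g m n a b
          (fun i hi => by rw [hac]; exact if_neg (by omega))
          (fun i hi => by rw [hbc]; exact if_neg (by omega)) ⟨j, h⟩
        rw [hveq, hv] at hkey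
        simp at hkey ⊢
        exact hkey.symm
      · rw [coeff_zero]
        apply coeff_eq_zero_of_degree_lt
        apply lt_of_le_of_lt (degree_add_le _ _)
        apply lt_of_lt_of_le (max_lt (degree_mul_lt_of a f n m hdega hf)
          (by have := degree_mul_lt_of b g m n hdegb hg
              rwa [Nat.add_comm m n] at this))
        exact_mod_cast Nat.cast_le.2 h
    refine ⟨a, b, ?_, hdega, hdegb, hrel⟩
    rintro ⟨ha0, hb0⟩
    apply hv0
    rw [← hveq]
    funext i
    rcases lt_or_ge (i : ℕ) n with h | h <;> simp [h, ha0, hb0]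
  · rintro ⟨a, b, hab, hda, hdb, hrel⟩
    have hacz : ∀ i, n ≤ i → a.coeff i = 0 := (degree_lt_iff_coeff_zero _ _).1 hda
    have hbcz : ∀ i, m ≤ i → b.coeff i = 0 := (degree_lt_iff_coeff_zero _ _).1 hdb
    refine ⟨fun i : Fin (n+m) =>
      if (i : ℕ) < n then a.coeff (i : ℕ) else b.coeff ((i : ℕ) - n), ?_, ?_⟩
    · intro h0
      apply hab
      constructor
      · ext k
        rcases lt_or_ge k n with h | h
        · have := congrFun h0 ⟨k, by omega⟩
          simpa [h] using this
        · simp [hacz k h]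
      · ext k
        rcases lt_or_ge k m with h | h
        · have := congrFun h0 ⟨n + k, by omega⟩
          simpa [Nat.add_sub_cancel_left] using this
        · simp [hbcz k h]
    · funext j
      rw [vecMul_sylv f g m n a b hacz hbcz j, hrel, coeff_zero]
      rfl

lemma rel_iff_common_root [IsAlgClosed F] (f g : Polynomial F)
    (hf : f.Monic) (hg : g.Monic) :
    (∃ a b : Polynomial F, ¬(a = 0 ∧ b = 0) ∧ a.degree < (g.natDegree : WithBot ℕ) ∧
        b.degree < (f.natDegree : WithBot ℕ) ∧ a * f + b * g = 0) ↔
      ∃ r : F, f.eval r = 0 ∧ g.eval r = 0 := by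
  classical
  constructor
  · rintro ⟨a, b, hab, hda, hdb, hrel⟩
    by_contra hroot
    push_neg at hroot
    have hcop : IsCoprime f g := by
      rw [← EuclideanDomain.gcd_isUnit_iff]
      set d := EuclideanDomain.gcd f g with hd
      have hd0 : d ≠ 0 := by
        intro h
        exact hf.ne_zero (EuclideanDomain.gcd_eq_zero_iff.mp h).1
      by_contra hu
      have hdeg : d.degree ≠ 0 := fun h => hu (isUnit_iff_degree_eq_zero.2 h)
      obtain ⟨r, hr⟩ := IsAlgClosed.exists_root d hdeg
      have hrf : f.eval r = 0 :=
        eval_eq_zero_of_dvd_of_eval_eq_zero (EuclideanDomain.gcd_dvd_left f g) hr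
      have hrg : g.eval r = 0 :=
        eval_eq_zero_of_dvd_of_eval_eq_zero (EuclideanDomain.gcd_dvd_right f g) hr
      exact hroot r hrf hrg
    have hb0 : b ≠ 0 := by
      intro h0
      rw [h0, zero_mul, add_zero, mul_eq_zero] at hrel
      rcases hrel with h | h
      · exact hab ⟨h, h0⟩
      · exact hf.ne_zero h
    have hfb : f ∣ b := by
      have : f ∣ b * g := ⟨-a, by linear_combination hrel⟩
      exact hcop.dvd_of_dvd_mul_right this
    have := Polynomial.eq_zero_of_dvd_of_degree_lt hfb
      (by rw [degree_eq_natDegree hf.ne_zero]; exact hdb)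
    exact hb0 this
  · rintro ⟨r, hfr, hgr⟩
    have hmr : (X - C r).Monic := monic_X_sub_C r
    set f' := f /ₘ (X - C r) with hf'
    set g' := g /ₘ (X - C r) with hg'
    have hfd : (X - C r) * f' = f := mul_divByMonic_eq_iff_isRoot.2 hfr
    have hgd : (X - C r) * g' = g := mul_divByMonic_eq_iff_isRoot.2 hgr
    refine ⟨g', -f', ?_, ?_, ?_, ?_⟩
    · rintro ⟨h1, _⟩
      rw [h1, mul_zero] at hgd
      exact hg.ne_zero hgd.symm
    · rw [← degree_eq_natDegree hg.ne_zero]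
      exact degree_divByMonic_lt g (X - C r) hg.ne_zero (by rw [degree_X_sub_C]; norm_num)
    · rw [degree_neg, ← degree_eq_natDegree hf.ne_zero]
      exact degree_divByMonic_lt f (X - C r) hf.ne_zero (by rw [degree_X_sub_C]; norm_num)
    · rw [← hfd, ← hgd]; ring

lemma resultant_eq_zero_iff_root [IsAlgClosed F] (f g : Polynomial F)
    (hf : f.Monic) (hg : g.Monic) :
    _root_.resultant f g = 0 ↔ ∃ r : F, f.eval r = 0 ∧ g.eval r = 0 := by
  rw [resultant_eq_sylv,
    det_sylv_eq_zero_iff f g f.natDegree g.natDegree degree_le_natDegree degree_le_natDegree,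
    rel_iff_common_root f g hf hg]

end Field

section DivDiff

variable {K : Type*} [Field K]

lemma divDiff_key (p : K[X]) :
    (X - C (X : K[X])) * divDiff p = p.map (C : K →+* K[X]) - C p := by
  have hdvd : (X - C (X : K[X])) ∣ (p.map (C : K →+* K[X]) - C p) := by
    have := X_sub_C_dvd_sub_C_eval (a := (X : K[X])) (p := p.map (C : K →+* K[X]))
    rwa [eval_map, eval₂_C_X] at this
  have hm : (X - C (X : K[X])).Monic := monic_X_sub_C _
  have h := modByMonic_add_div (p.map (C : K →+* K[X]) - C p) (X - C (X : K[X]))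
  rw [(modByMonic_eq_zero_iff_dvd hm).2 hdvd, zero_add] at h
  rw [divDiff, h]

lemma divDiff_monic (p : K[X]) (hp : p.Monic) (hn : 1 ≤ p.natDegree) :
    (divDiff p).Monic ∧ (divDiff p).natDegree + 1 = p.natDegree := by
  have h2 : (p.map (C : K →+* K[X])).natDegree = p.natDegree :=
    natDegree_map_eq_of_injective (C_injective) p
  have h1 : (p.map (C : K →+* K[X])).Monic := hp.map _
  have h3 : (C p : (K[X])[X]).degree < (p.map (C : K →+* K[X])).degree := by
    calc (C p : (K[X])[X]).degree ≤ 0 := degree_C_le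
      _ < (p.map (C : K →+* K[X])).degree := by
        rw [degree_eq_natDegree h1.ne_zero, h2]; exact_mod_cast by omega
  have hnum : (p.map (C : K →+* K[X]) - C p).Monic := h1.sub_of_left h3
  have hdeg : (p.map (C : K →+* K[X]) - C p).natDegree = p.natDegree := by
    rw [natDegree_sub_eq_left_of_natDegree_lt, h2]
    rw [natDegree_C, h2]; omega
  have hkey := divDiff_key p
  have hm : (X - C (X : K[X])).Monic := monic_X_sub_C _
  have hd0 : divDiff p ≠ 0 := by
    intro h; rw [h, mul_zero] at hkey; exact hnum.ne_zero hkey.symm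
  constructor
  · have := leadingCoeff_mul (X - C (X : K[X])) (divDiff p)
    rw [hkey, hnum.leadingCoeff, hm.leadingCoeff, one_mul] at this
    exact this.symm
  · have := natDegree_mul hm.ne_zero hd0
    rw [hkey, hdeg, natDegree_X_sub_C] at this
    omega

lemma divDiff_map (p : K[X]) (α : K) :
    (divDiff p).map (evalRingHom α) = (p - C (p.eval α)) /ₘ (X - C α) := by
  have hkey := congrArg (Polynomial.map (evalRingHom α)) (divDiff_key p)
  simp only [Polynomial.map_mul, Polynomial.map_sub, map_X, map_C] at hkey
  rw [Polynomial.map_map] at hkey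
  have hcomp : (evalRingHom α).comp (C : K →+* K[X]) = RingHom.id K := by
    ext x; simp
  rw [hcomp, Polynomial.map_id] at hkey
  simp only [eval₂_at_apply, coe_evalRingHom, eval_X] at hkey
  rw [← hkey, mul_divByMonic_cancel_left _ (monic_X_sub_C α)]

lemma sub_C_eval_factor (p : K[X]) (α : K) :
    (X - C α) * ((p - C (p.eval α)) /ₘ (X - C α)) = p - C (p.eval α) := by
  have hdvd : (X - C α) ∣ (p - C (p.eval α)) := X_sub_C_dvd_sub_C_eval
  have hm : (X - C α).Monic := monic_X_sub_C α
  have h := modByMonic_add_div (p - C (p.eval α)) (X - C α)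
  rw [(modByMonic_eq_zero_iff_dvd hm).2 hdvd, zero_add] at h
  exact h

lemma eval_divDiffAt_of_ne (p : K[X]) (α β : K) (hβ : β ≠ α) :
    ((p - C (p.eval α)) /ₘ (X - C α)).eval β = 0 ↔ p.eval β = p.eval α := by
  have h := congrArg (Polynomial.eval β) (sub_C_eval_factor p α)
  simp only [eval_mul, eval_sub, eval_X, eval_C] at h
  constructor
  · intro h0; rw [h0, mul_zero] at h
    exact sub_eq_zero.mp h.symm
  · intro h0
    rw [h0, sub_self] at h
    rcases mul_eq_zero.mp h with h1 | h1
    · exact absurd (sub_eq_zero.mp h1) hβ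
    · exact h1

lemma eval_divDiffAt_self (p : K[X]) (α : K) :
    ((p - C (p.eval α)) /ₘ (X - C α)).eval α = (derivative p).eval α := by
  have h := congrArg derivative (sub_C_eval_factor p α)
  rw [derivative_mul, derivative_sub, derivative_X, derivative_C, sub_zero, one_mul,
    derivative_sub, derivative_C, sub_zero] at h
  have h2 := congrArg (Polynomial.eval α) h
  simp only [eval_add, eval_mul, eval_sub, eval_X, eval_C, sub_self, zero_mul, add_zero] at h2
  exact h2

lemma monic_natDegree_zero_eq_one {R : Type*} [Semiring R] {f : Polynomial R}
    (hf : f.Monic) (h0 : f.natDegree = 0) :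
    f = 1 := by
  have := eq_C_of_natDegree_eq_zero h0
  rwa [← h0, ← leadingCoeff, hf.leadingCoeff, map_one] at this

end DivDiff

section Spectrum

variable {K : Type*} [Field K]

/-- Polynomials whose derivative vanishes at `α`, as a subalgebra. -/
def derivZeroAt (α : K) : Subalgebra K (Polynomial K) where
  carrier := {f | (derivative f).eval α = 0}
  mul_mem' := by
    intro a b ha hb
    simp only [Set.mem_setOf_eq] at *
    rw [derivative_mul, eval_add, eval_mul, eval_mul, ha, hb, zero_mul, mul_zero, add_zero]
  add_mem' := by
    intro a b ha hb
    simp only [Set.mem_setOf_eq] at *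
    rw [derivative_add, eval_add, ha, hb, add_zero]
  algebraMap_mem' := by
    intro r
    simp [algebraMap_eq]

/-- Polynomials taking equal values at `α` and `β`, as a subalgebra. -/
def eqEvalAt (α β : K) : Subalgebra K (Polynomial K) where
  carrier := {f | f.eval α = f.eval β}
  mul_mem' := by
    intro a b ha hb
    simp only [Set.mem_setOf_eq] at *
    rw [eval_mul, eval_mul, ha, hb]
  add_mem' := by
    intro a b ha hb
    simp only [Set.mem_setOf_eq] at *
    rw [eval_add, eval_add, ha, hb]
  algebraMap_mem' := by intro r; simp [algebraMap_eq]

lemma spectrum_iff_cond (p q : K[X]) (α : K) :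
    α ∈ subalgebraSpectrum (Algebra.adjoin K {p, q}) ↔
      (((derivative p).eval α = 0 ∧ (derivative q).eval α = 0) ∨
        ∃ β : K, β ≠ α ∧ p.eval α = p.eval β ∧ q.eval α = q.eval β) := by
  have hpmem : p ∈ Algebra.adjoin K {p, q} := Algebra.subset_adjoin (by simp)
  have hqmem : q ∈ Algebra.adjoin K {p, q} := Algebra.subset_adjoin (by simp)
  constructor
  · rintro (h | ⟨β, hβ, h⟩)
    · exact Or.inl ⟨h p hpmem, h q hqmem⟩
    · exact Or.inr ⟨β, hβ, h p hpmem, h q hqmem⟩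
  · rintro (⟨hp', hq'⟩ | ⟨β, hβ, hpβ, hqβ⟩)
    · left
      intro f hf
      have hle : Algebra.adjoin K {p, q} ≤ derivZeroAt α := by
        apply Algebra.adjoin_le
        rintro f (rfl | rfl)
        · exact hp'
        · exact hq'
      exact hle hf
    · right
      refine ⟨β, hβ, fun f hf => ?_⟩
      have hle : Algebra.adjoin K {p, q} ≤ eqEvalAt α β := by
        apply Algebra.adjoin_le
        rintro f (rfl | rfl)
        · exact hpβ
        · exact hqβ
      exact hle hf

end Spectrum

theorem mem_spectrum_iff_root_of_charPoly
    {K : Type*} [Field K] [IsAlgClosed K] [CharZero K]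
    (p q : Polynomial K) (hp : p.Monic) (hq : q.Monic)
    (hcop : Nat.Coprime p.natDegree q.natDegree)
    (A : Subalgebra K (Polynomial K)) (hA : A = Algebra.adjoin K {p, q})
    (α : K) :
    (α ∈ subalgebraSpectrum A ↔
      ((Polynomial.derivative p).eval α = 0 ∧ (Polynomial.derivative q).eval α = 0) ∨
        ∃ β : K, β ≠ α ∧ p.eval α = p.eval β ∧ q.eval α = q.eval β) ∧
    (α ∈ subalgebraSpectrum A ↔ (charPoly p q).eval α = 0) := by
  have part1 : α ∈ subalgebraSpectrum A ↔
      (((derivative p).eval α = 0 ∧ (derivative q).eval α = 0) ∨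
        ∃ β : K, β ≠ α ∧ p.eval α = p.eval β ∧ q.eval α = q.eval β) := by
    rw [hA]; exact spectrum_iff_cond p q α
  refine ⟨part1, part1.trans ?_⟩
  -- It remains to show condition (ii) is equivalent to `χ_{p,q}(α) = 0`.
  set pα : Polynomial K := (p - C (p.eval α)) /ₘ (X - C α) with hpα
  set qα : Polynomial K := (q - C (q.eval α)) /ₘ (X - C α) with hqα
  rcases Nat.eq_zero_or_pos p.natDegree with hn0 | hn1
  · -- degenerate case: p = 1, q has degree 1
    have hm1 : q.natDegree = 1 := by
      have := hcop; rw [hn0] at this; exact Nat.coprime_zero_left _ |>.mp this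
    have hpone : p = 1 := monic_natDegree_zero_eq_one hp hn0
    obtain ⟨hqm, hqd⟩ := divDiff_monic q hq (by omega)
    have hqone : divDiff q = 1 := monic_natDegree_zero_eq_one (f := divDiff q) hqm (by omega)
    have hqαone : qα = 1 := by
      rw [hqα, ← divDiff_map, hqone, Polynomial.map_one]
    have hderivq : (derivative q).eval α = 1 := by
      rw [← eval_divDiffAt_self, ← hqα, hqαone, eval_one]
    have hdp0 : divDiff p = 0 := by
      rw [divDiff, hpone]
      simp [zero_divByMonic]
    have hchar : charPoly p q = 1 := by
      rw [charPoly, resultant_eq_sylv, hdp0, natDegree_zero, hqone, natDegree_one]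
      exact Matrix.det_fin_zero
    rw [hchar, eval_one]
    constructor
    · rintro (⟨_, h2⟩ | ⟨β, hβ, _, hqβ⟩)
      · rw [hderivq] at h2; exact absurd h2 one_ne_zero
      · have := (eval_divDiffAt_of_ne q α β hβ).2 hqβ.symm
        rw [← hqα, hqαone, eval_one] at this
        exact absurd this one_ne_zero
    · intro h; exact absurd h one_ne_zero
  rcases Nat.eq_zero_or_pos q.natDegree with hm0 | hm1
  · -- degenerate case: q = 1, p has degree 1
    have hn1' : p.natDegree = 1 := by
      have := hcop; rw [hm0] at this; exact Nat.coprime_zero_right _ |>.mp this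
    have hqone : q = 1 := monic_natDegree_zero_eq_one hq hm0
    obtain ⟨hpm, hpd⟩ := divDiff_monic p hp (by omega)
    have hpone : divDiff p = 1 := monic_natDegree_zero_eq_one (f := divDiff p) hpm (by omega)
    have hpαone : pα = 1 := by
      rw [hpα, ← divDiff_map, hpone, Polynomial.map_one]
    have hderivp : (derivative p).eval α = 1 := by
      rw [← eval_divDiffAt_self, ← hpα, hpαone, eval_one]
    have hdq0 : divDiff q = 0 := by
      rw [divDiff, hqone]
      simp [zero_divByMonic]
    have hchar : charPoly p q = 1 := by
      rw [charPoly, resultant_eq_sylv, hdq0, natDegree_zero, hpone, natDegree_one]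
      exact Matrix.det_fin_zero
    rw [hchar, eval_one]
    constructor
    · rintro (⟨h1, _⟩ | ⟨β, hβ, hpβ, _⟩)
      · rw [hderivp] at h1; exact absurd h1 one_ne_zero
      · have := (eval_divDiffAt_of_ne p α β hβ).2 hpβ.symm
        rw [← hpα, hpαone, eval_one] at this
        exact absurd this one_ne_zero
    · intro h; exact absurd h one_ne_zero
  -- main case: both degrees positive
  obtain ⟨hpm, hpd⟩ := divDiff_monic p hp hn1
  obtain ⟨hqm, hqd⟩ := divDiff_monic q hq hm1
  have hmapd_p : ((divDiff p).map (evalRingHom α)).natDegree = (divDiff p).natDegree :=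
    hpm.natDegree_map _
  have hmapd_q : ((divDiff q).map (evalRingHom α)).natDegree = (divDiff q).natDegree :=
    hqm.natDegree_map _
  have heval : (charPoly p q).eval α = _root_.resultant pα qα := by
    have h := resultant_map (evalRingHom α) (divDiff p) (divDiff q) hmapd_p hmapd_q
    rw [divDiff_map, divDiff_map] at h
    rw [hpα, hqα, h]; rfl
  have hpαm : pα.Monic := by rw [hpα, ← divDiff_map]; exact hpm.map _
  have hqαm : qα.Monic := by rw [hqα, ← divDiff_map]; exact hqm.map _
  rw [heval, resultant_eq_zero_iff_root pα qα hpαm hqαm]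
  constructor
  · rintro (⟨h1, h2⟩ | ⟨β, hβ, h1, h2⟩)
    · refine ⟨α, ?_, ?_⟩
      · rw [hpα, eval_divDiffAt_self]; exact h1
      · rw [hqα, eval_divDiffAt_self]; exact h2
    · refine ⟨β, ?_, ?_⟩
      · rw [hpα, eval_divDiffAt_of_ne p α β hβ]; exact h1.symm
      · rw [hqα, eval_divDiffAt_of_ne q α β hβ]; exact h2.symm
  · rintro ⟨r, hr1, hr2⟩
    by_cases hr : r = α
    · subst hr
      left
      constructor
      · rw [hpα, eval_divDiffAt_self] at hr1; exact hr1
      · rw [hqα, eval_divDiffAt_self] at hr2; exact hr2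
    · right
      refine ⟨r, hr, ?_, ?_⟩
      · rw [hpα, eval_divDiffAt_of_ne p α r hr] at hr1; exact hr1.symm
      · rw [hqα, eval_divDiffAt_of_ne q α r hr] at hr2; exact hr2.symm
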